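/- (Or rule with ε-values.) Let P be a probability measure, let A, B, C be measurable events with P(A) > 0 and P(B) > 0, and let ε₁, ε₂ ∈ [0,1] with ε₁·ε₂ < 1. If P(C|A) ≥ 1 - ε₁ and P(C|B) ≥ 1 - ε₂, then P(C | A ∪ B) ≥ 1 - (ε₁ + ε₂ - 2·ε₁·ε₂)/(1 - ε₁·ε₂). -/

import Mathlib

open MeasureTheory

/-- Conditional probability `P(E|H) = P(E ∩ H) / P(H)` as a real number. -/
noncomputable def condProb {Ω : Type*} [MeasurableSpace Ω] (P : Measure Ω) (E H : Set Ω) : ℝ :=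
  (P (E ∩ H)).toReal / (P H).toReal

/-- Or rule with ε-values. -/
theorem or_rule_eps {Ω : Type*} [MeasurableSpace Ω] (P : Measure Ω)
    [IsProbabilityMeasure P] (A B C : Set Ω)
    (hA : MeasurableSet A) (hB : MeasurableSet B) (hC : MeasurableSet C)
    (hPA : 0 < P A) (hPB : 0 < P B) (ε₁ ε₂ : ℝ)
    (hε₁ : ε₁ ∈ Set.Icc (0 : ℝ) 1) (hε₂ : ε₂ ∈ Set.Icc (0 : ℝ) 1) (hεε : ε₁ * ε₂ < 1)
    (h1 : condProb P C A ≥ 1 - ε₁) (h2 : condProb P C B ≥ 1 - ε₂) :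
    condProb P C (A ∪ B) ≥ 1 - (ε₁ + ε₂ - 2 * (ε₁ * ε₂)) / (1 - ε₁ * ε₂) := by
  obtain ⟨hε₁0, hε₁1⟩ := hε₁
  obtain ⟨hε₂0, hε₂1⟩ := hε₂
  have hD : (0:ℝ) < 1 - ε₁ * ε₂ := by linarith
  set a := (P A).toReal with ha
  set b := (P B).toReal with hb
  set u := (P (A ∪ B)).toReal with hu
  set ca := (P (C ∩ A)).toReal with hca
  set cb := (P (C ∩ B)).toReal with hcb
  set y := (P (C ∩ (A ∪ B))).toReal with hy
  have ha0 : 0 < a := ENNReal.toReal_pos hPA.ne' (measure_ne_top P A)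
  have hb0 : 0 < b := ENNReal.toReal_pos hPB.ne' (measure_ne_top P B)
  have hua : a ≤ u :=
    (ENNReal.toReal_le_toReal (measure_ne_top _ _) (measure_ne_top _ _)).mpr
      (measure_mono Set.subset_union_left)
  have hu0 : 0 < u := lt_of_lt_of_le ha0 hua
  -- from hypotheses
  have e1 : (1 - ε₁) * a ≤ ca := by
    have := (le_div_iff₀ ha0).mp h1
    linarith
  have e2 : (1 - ε₂) * b ≤ cb := by
    have := (le_div_iff₀ hb0).mp h2
    linarith
  have eya : ca ≤ y :=
    (ENNReal.toReal_le_toReal (measure_ne_top _ _) (measure_ne_top _ _)).mpr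
      (measure_mono (Set.inter_subset_inter_right _ Set.subset_union_left))
  have eyb : cb ≤ y :=
    (ENNReal.toReal_le_toReal (measure_ne_top _ _) (measure_ne_top _ _)).mpr
      (measure_mono (Set.inter_subset_inter_right _ Set.subset_union_right))
  -- P(A \ C) = a - ca, P(B \ C) = b - cb
  have hAC : (P (A \ C)).toReal = a - ca := by
    have h := measure_inter_add_diff (μ := P) A hC
    have h' : (P (A ∩ C)).toReal + (P (A \ C)).toReal = a := by
      rw [← ENNReal.toReal_add (measure_ne_top _ _) (measure_ne_top _ _), h]
    rw [Set.inter_comm] at h'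
    linarith
  have hBC : (P (B \ C)).toReal = b - cb := by
    have h := measure_inter_add_diff (μ := P) B hC
    have h' : (P (B ∩ C)).toReal + (P (B \ C)).toReal = b := by
      rw [← ENNReal.toReal_add (measure_ne_top _ _) (measure_ne_top _ _), h]
    rw [Set.inter_comm] at h'
    linarith
  -- subadditivity: u ≤ y + (a - ca) + (b - cb)
  have esub : u ≤ y + (a - ca) + (b - cb) := by
    have hsub : A ∪ B ⊆ (C ∩ (A ∪ B)) ∪ (A \ C) ∪ (B \ C) := by
      intro x hx
      by_cases hxc : x ∈ C
      · exact Or.inl (Or.inl ⟨hxc, hx⟩)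
      · rcases hx with h | h
        · exact Or.inl (Or.inr ⟨h, hxc⟩)
        · exact Or.inr ⟨h, hxc⟩
    have hm : P (A ∪ B) ≤ P (C ∩ (A ∪ B)) + P (A \ C) + P (B \ C) :=
      (measure_mono hsub).trans
        ((measure_union_le _ _).trans (add_le_add_left (measure_union_le _ _) _))
    have hm' : u ≤ (P (C ∩ (A ∪ B)) + P (A \ C) + P (B \ C)).toReal :=
      (ENNReal.toReal_le_toReal (measure_ne_top _ _)
        (by finiteness)).mpr hm
    rw [ENNReal.toReal_add (by finiteness) (measure_ne_top _ _),
      ENNReal.toReal_add (measure_ne_top _ _) (measure_ne_top _ _), hAC, hBC] at hm'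
    exact hm'
  -- key combination
  have e3 : u - y ≤ ε₁ * a + ε₂ * b := by nlinarith
  have ey1 : (1 - ε₁) * a ≤ y := le_trans e1 eya
  have ey2 : (1 - ε₂) * b ≤ y := le_trans e2 eyb
  have key : (1 - ε₁ * ε₂) * (u - y) ≤ (ε₁ + ε₂ - 2 * (ε₁ * ε₂)) * u := by
    have t1 : ε₁ * (1 - ε₂) * (u - y) ≤ ε₁ * (1 - ε₂) * (u - (1 - ε₁) * a) :=
      mul_le_mul_of_nonneg_left (by linarith) (by nlinarith)
    have t2 : ε₂ * (1 - ε₁) * (u - y) ≤ ε₂ * (1 - ε₁) * (u - (1 - ε₂) * b) :=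
      mul_le_mul_of_nonneg_left (by linarith) (by nlinarith)
    have t3 : (1 - ε₁) * (1 - ε₂) * (u - y) ≤ (1 - ε₁) * (1 - ε₂) * (ε₁ * a + ε₂ * b) :=
      mul_le_mul_of_nonneg_left e3 (by nlinarith)
    have hsum := add_le_add (add_le_add t1 t2) t3
    ring_nf at hsum ⊢
    linarith [hsum]
  -- conclude
  show (1:ℝ) - (ε₁ + ε₂ - 2 * (ε₁ * ε₂)) / (1 - ε₁ * ε₂) ≤ y / u
  rw [← sub_nonneg]
  have expand : y / u - (1 - (ε₁ + ε₂ - 2 * (ε₁ * ε₂)) / (1 - ε₁ * ε₂)) =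
      ((ε₁ + ε₂ - 2 * (ε₁ * ε₂)) * u - (1 - ε₁ * ε₂) * (u - y)) / ((1 - ε₁ * ε₂) * u) := by
    field_simp
    ring
  rw [expand]
  apply div_nonneg (by linarith) (by positivity)
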